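/- arXiv:2506.20843 — 2 statements merged into one kernel-verified Lean document; each statement's English description precedes it below -/
import Mathlib

section
/- The generalized Hilbert–Schmidt distance d₂ defined on the disjoint union of unitary groups by d₂(x,y) = ‖x ⊕ 0_{m−n} − y‖_{2,m} for x ∈ U(n), y ∈ U(m), n ≤ m (where ‖·‖_{2,m} is the normalized Hilbert–Schmidt norm on M_m(ℂ)) is a metric on ⨆_{m∈ℕ} U(m). -/
open Matrix

/-- normalized Hilbert–Schmidt norm on `m × m` complex matrices -/
noncomputable def nHS (m : ℕ) (A : Matrix (Fin m) (Fin m) ℂ) : ℝ :=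
  Real.sqrt (((Matrix.trace (Aᴴ * A)).re) / m)

/-- pad an `n × n` matrix to an `m × m` matrix by a zero block -/
def padMat {n m : ℕ} (A : Matrix (Fin n) (Fin n) ℂ) : Matrix (Fin m) (Fin m) ℂ :=
  fun i j => if hi : (i : ℕ) < n then if hj : (j : ℕ) < n then A ⟨i, hi⟩ ⟨j, hj⟩ else 0 else 0

/-- the generalized Hilbert–Schmidt distance on `⨆ₘ U(m)` -/
noncomputable def d₂ (x y : Σ m : ℕ, Matrix.unitaryGroup (Fin m) ℂ) : ℝ :=
  if x.1 ≤ y.1 then nHS y.1 (padMat (x.2 : Matrix (Fin x.1) (Fin x.1) ℂ) - (y.2 : Matrix (Fin y.1) (Fin y.1) ℂ))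
  else nHS x.1 (padMat (y.2 : Matrix (Fin y.1) (Fin y.1) ℂ) - (x.2 : Matrix (Fin x.1) (Fin x.1) ℂ))

open Matrix Finset

noncomputable section D2Aux

/-- sum of squared absolute values of entries (columns outer). -/
def fSq {k : ℕ} (A : Matrix (Fin k) (Fin k) ℂ) : ℝ :=
  ∑ j, ∑ i, Complex.normSq (A i j)

def colSq {k : ℕ} (A : Matrix (Fin k) (Fin k) ℂ) (j : Fin k) : ℝ :=
  ∑ i, Complex.normSq (A i j)

lemma fSq_eq_sum_colSq {k : ℕ} (A : Matrix (Fin k) (Fin k) ℂ) :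
    fSq A = ∑ j, colSq A j := rfl

lemma colSq_nonneg {k : ℕ} (A : Matrix (Fin k) (Fin k) ℂ) (j : Fin k) : 0 ≤ colSq A j :=
  Finset.sum_nonneg fun _ _ => Complex.normSq_nonneg _

lemma fSq_nonneg {k : ℕ} (A : Matrix (Fin k) (Fin k) ℂ) : 0 ≤ fSq A :=
  Finset.sum_nonneg fun _ _ => colSq_nonneg _ _

/-- `nHS` in terms of `fSq`. -/
lemma nHS_eq {k : ℕ} (A : Matrix (Fin k) (Fin k) ℂ) :
    nHS k A = Real.sqrt (fSq A / k) := by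
  unfold nHS fSq
  congr 2
  rw [Matrix.trace, Complex.re_sum]
  refine Finset.sum_congr rfl fun j _ => ?_
  rw [Matrix.diag_apply, Matrix.mul_apply, Complex.re_sum]
  refine Finset.sum_congr rfl fun i _ => ?_
  rw [Matrix.conjTranspose_apply]
  have : (starRingEnd ℂ) (A i j) * A i j = (Complex.normSq (A i j) : ℂ) := by
    rw [mul_comm, Complex.mul_conj]
  simp [RCLike.star_def, this]

lemma sum_dite_lt {n M : ℕ} (h : n ≤ M) (f : ∀ i : ℕ, i < n → ℝ) :
    (∑ i : Fin M, if hi : (i : ℕ) < n then f i hi else 0) = ∑ i : Fin n, f i i.isLt := by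
  rw [Fin.sum_univ_eq_sum_range (fun i => if hi : i < n then f i hi else 0) M,
    show (∑ i : Fin n, f i i.isLt) =
      ∑ i ∈ range n, (fun i => if hi : i < n then f i hi else 0) i from by
        rw [← Fin.sum_univ_eq_sum_range (fun i => if hi : i < n then f i hi else 0) n]
        exact Finset.sum_congr rfl fun i _ => (dif_pos i.isLt).symm]
  exact (Finset.sum_subset (Finset.range_subset_range.mpr h)
    (fun i _ hi => dif_neg (by simpa using hi))).symm

lemma padMat_self {n : ℕ} (A : Matrix (Fin n) (Fin n) ℂ) :
    (padMat A : Matrix (Fin n) (Fin n) ℂ) = A := by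
  funext i j; simp [padMat]

lemma padMat_padMat {n m M : ℕ} (h : n ≤ m) (A : Matrix (Fin n) (Fin n) ℂ) :
    (padMat (padMat A : Matrix (Fin m) (Fin m) ℂ) : Matrix (Fin M) (Fin M) ℂ) = padMat A := by
  funext i j
  simp only [padMat]
  split_ifs <;> first | rfl | omega

lemma padMat_sub {n M : ℕ} (A B : Matrix (Fin n) (Fin n) ℂ) :
    (padMat A - padMat B : Matrix (Fin M) (Fin M) ℂ) = padMat (A - B) := by
  funext i j
  simp only [Matrix.sub_apply, padMat]
  split_ifs <;> simp

lemma colSq_padMat {n M : ℕ} (h : n ≤ M) (A : Matrix (Fin n) (Fin n) ℂ) (j : Fin M) :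
    colSq (padMat A : Matrix (Fin M) (Fin M) ℂ) j =
      if hj : (j : ℕ) < n then colSq A ⟨j, hj⟩ else 0 := by
  split_ifs with hj
  · unfold colSq
    rw [← sum_dite_lt h (fun i hi => Complex.normSq (A ⟨i, hi⟩ ⟨j, hj⟩))]
    refine Finset.sum_congr rfl fun i _ => ?_
    simp only [padMat, dif_pos hj]
    split_ifs <;> simp
  · unfold colSq
    refine Finset.sum_eq_zero fun i _ => ?_
    simp only [padMat]
    split_ifs <;> simp

lemma fSq_padMat {n M : ℕ} (h : n ≤ M) (A : Matrix (Fin n) (Fin n) ℂ) :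
    fSq (padMat A : Matrix (Fin M) (Fin M) ℂ) = fSq A := by
  rw [fSq_eq_sum_colSq, fSq_eq_sum_colSq,
    show (∑ j : Fin M, colSq (padMat A : Matrix (Fin M) (Fin M) ℂ) j) =
      ∑ j : Fin M, if hj : (j : ℕ) < n then colSq A ⟨j, hj⟩ else 0 from
        Finset.sum_congr rfl fun j _ => colSq_padMat h A j]
  rw [sum_dite_lt h (fun j hj => colSq A ⟨j, hj⟩)]
/-- the `j`-th column as a Euclidean vector -/
def colVec {k : ℕ} (A : Matrix (Fin k) (Fin k) ℂ) (j : Fin k) : EuclideanSpace ℂ (Fin k) :=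
  WithLp.toLp 2 (fun i => A i j)

lemma norm_colVec {k : ℕ} (A : Matrix (Fin k) (Fin k) ℂ) (j : Fin k) :
    ‖colVec A j‖ = Real.sqrt (colSq A j) := by
  rw [EuclideanSpace.norm_eq]
  congr 1
  exact Finset.sum_congr rfl fun i _ => by
    rw [Complex.sq_norm]; rfl

lemma colVec_sub {k : ℕ} (A B : Matrix (Fin k) (Fin k) ℂ) (j : Fin k) :
    colVec (A - B) j = colVec A j - colVec B j := by ext i; simp [colVec]

/-- triangle inequality for columns -/
lemma sqrt_colSq_triangle {k : ℕ} (A B C : Matrix (Fin k) (Fin k) ℂ) (j : Fin k) :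
    Real.sqrt (colSq (A - C) j) ≤ Real.sqrt (colSq (A - B) j) + Real.sqrt (colSq (B - C) j) := by
  rw [← norm_colVec, ← norm_colVec, ← norm_colVec, colVec_sub, colVec_sub, colVec_sub]
  have : colVec A j - colVec C j = (colVec A j - colVec B j) + (colVec B j - colVec C j) := by
    abel
  rw [this]
  exact norm_add_le _ _

def matVec {k : ℕ} (A : Matrix (Fin k) (Fin k) ℂ) : EuclideanSpace ℂ (Fin k × Fin k) :=
  WithLp.toLp 2 (fun p : Fin k × Fin k => A p.2 p.1)

lemma norm_matVec {k : ℕ} (A : Matrix (Fin k) (Fin k) ℂ) :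
    ‖matVec A‖ = Real.sqrt (fSq A) := by
  rw [EuclideanSpace.norm_eq]
  congr 1
  rw [fSq, Fintype.sum_prod_type]
  exact Finset.sum_congr rfl fun j _ => Finset.sum_congr rfl fun i _ => by
    rw [Complex.sq_norm]; rfl

lemma matVec_sub {k : ℕ} (A B : Matrix (Fin k) (Fin k) ℂ) :
    matVec (A - B) = matVec A - matVec B := by ext p; simp [matVec]

lemma sqrt_fSq_triangle {k : ℕ} (A B C : Matrix (Fin k) (Fin k) ℂ) :
    Real.sqrt (fSq (A - C)) ≤ Real.sqrt (fSq (A - B)) + Real.sqrt (fSq (B - C)) := by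
  rw [← norm_matVec, ← norm_matVec, ← norm_matVec, matVec_sub, matVec_sub, matVec_sub]
  have : matVec A - matVec C = (matVec A - matVec B) + (matVec B - matVec C) := by abel
  rw [this]
  exact norm_add_le _ _

lemma fSq_sub_comm {k : ℕ} (A B : Matrix (Fin k) (Fin k) ℂ) :
    fSq (A - B) = fSq (B - A) := by
  unfold fSq
  refine Finset.sum_congr rfl fun j _ => Finset.sum_congr rfl fun i _ => ?_
  rw [show (A - B) i j = -((B - A) i j) from by simp, Complex.normSq_neg]

lemma eq_of_fSq_sub_eq_zero {k : ℕ} {A B : Matrix (Fin k) (Fin k) ℂ}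
    (h : fSq (A - B) = 0) : A = B := by
  have h1 : ∀ j ∈ (univ : Finset (Fin k)), colSq (A - B) j = 0 := by
    rw [fSq_eq_sum_colSq] at h
    exact (Finset.sum_eq_zero_iff_of_nonneg fun j _ => colSq_nonneg _ _).mp h
  funext i j
  have h2 := (Finset.sum_eq_zero_iff_of_nonneg
    fun i (_ : i ∈ (univ : Finset (Fin k))) => Complex.normSq_nonneg ((A - B) i j)).mp
    (h1 j (mem_univ j)) i (mem_univ i)
  have := Complex.normSq_eq_zero.mp h2
  rw [Matrix.sub_apply] at this
  exact sub_eq_zero.mp this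
lemma colSq_unitary {k : ℕ} (y : Matrix.unitaryGroup (Fin k) ℂ) (j : Fin k) :
    colSq (y : Matrix (Fin k) (Fin k) ℂ) j = 1 := by
  have h : star (y : Matrix (Fin k) (Fin k) ℂ) * y = 1 := Unitary.star_mul_self_of_mem y.2
  have h2 := congrFun (congrFun h j) j
  rw [Matrix.star_eq_conjTranspose, Matrix.mul_apply] at h2
  have h3 := congrArg Complex.re h2
  rw [Complex.re_sum] at h3
  have : ∀ i : Fin k, ((y : Matrix (Fin k) (Fin k) ℂ)ᴴ j i * (y : Matrix (Fin k) (Fin k) ℂ) i j).re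
      = Complex.normSq ((y : Matrix (Fin k) (Fin k) ℂ) i j) := by
    intro i
    rw [Matrix.conjTranspose_apply]
    have : star ((y : Matrix (Fin k) (Fin k) ℂ) i j) * (y : Matrix (Fin k) (Fin k) ℂ) i j
        = (Complex.normSq ((y : Matrix (Fin k) (Fin k) ℂ) i j) : ℂ) := by
      rw [RCLike.star_def, mul_comm, Complex.mul_conj]
    rw [this, Complex.ofReal_re]
  rw [Finset.sum_congr rfl fun i _ => this i] at h3
  rw [colSq, h3]
  simp [Matrix.one_apply]

/-- embedding into size-`M` matrices -/
def emb (M : ℕ) (x : Σ m : ℕ, Matrix.unitaryGroup (Fin m) ℂ) : Matrix (Fin M) (Fin M) ℂ :=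
  padMat (x.2 : Matrix (Fin x.1) (Fin x.1) ℂ)

lemma d₂_eq {x y : Σ m : ℕ, Matrix.unitaryGroup (Fin m) ℂ} {M : ℕ}
    (hx : x.1 ≤ M) (hy : y.1 ≤ M) :
    d₂ x y = Real.sqrt (fSq (emb M x - emb M y) / (max x.1 y.1 : ℕ)) := by
  unfold d₂
  split_ifs with h
  · rw [nHS_eq, Nat.max_eq_right h]
    congr 2
    have e1 : emb M x - emb M y
        = padMat ((padMat (x.2 : Matrix (Fin x.1) (Fin x.1) ℂ) : Matrix (Fin y.1) (Fin y.1) ℂ)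
            - (y.2 : Matrix (Fin y.1) (Fin y.1) ℂ)) := by
      rw [← padMat_sub]
      unfold emb
      rw [padMat_padMat h]
    rw [e1, fSq_padMat hy]
  · push_neg at h
    rw [nHS_eq, Nat.max_eq_left h.le]
    congr 2
    have e1 : emb M x - emb M y
        = padMat ((x.2 : Matrix (Fin x.1) (Fin x.1) ℂ)
            - (padMat (y.2 : Matrix (Fin y.1) (Fin y.1) ℂ) : Matrix (Fin x.1) (Fin x.1) ℂ)) := by
      rw [← padMat_sub]
      unfold emb
      rw [padMat_padMat h.le]
    rw [e1, fSq_padMat hx, fSq_sub_comm]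

lemma d₂_self (x : Σ m : ℕ, Matrix.unitaryGroup (Fin m) ℂ) : d₂ x x = 0 := by
  unfold d₂
  rw [if_pos le_rfl, padMat_self, sub_self, nHS_eq]
  have : fSq (0 : Matrix (Fin x.1) (Fin x.1) ℂ) = 0 := by
    unfold fSq; simp
  rw [this, zero_div, Real.sqrt_zero]

lemma d₂_nonneg (x y : Σ m : ℕ, Matrix.unitaryGroup (Fin m) ℂ) : 0 ≤ d₂ x y := by
  unfold d₂
  split_ifs <;> exact Real.sqrt_nonneg _

lemma eq_of_dim_zero {x y : Σ m : ℕ, Matrix.unitaryGroup (Fin m) ℂ}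
    (hx : x.1 = 0) (hy : y.1 = 0) : x = y := by
  obtain ⟨n, u⟩ := x
  obtain ⟨m, v⟩ := y
  dsimp at hx hy
  subst hx; subst hy
  congr 1
  apply Subtype.ext
  funext i j
  exact absurd i.isLt (by omega)
lemma num_key {m N A B F : ℝ} (hm : 0 < m) (hmN : m ≤ N) (hA : 0 ≤ A) (hB : 0 ≤ B)
    (hF0 : 0 ≤ F) (h1 : F ≤ (A + B) ^ 2) (h2 : F ≤ 4 * m) :
    Real.sqrt (F / m) ≤ Real.sqrt ((A ^ 2 + (N - m)) / N) + Real.sqrt ((B ^ 2 + (N - m)) / N) := by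
  have hN : (0 : ℝ) < N := lt_of_lt_of_le hm hmN
  have ht : (0 : ℝ) ≤ N - m := by linarith
  set a := Real.sqrt ((A ^ 2 + (N - m)) / N) with hadef
  set b := Real.sqrt ((B ^ 2 + (N - m)) / N) with hbdef
  have ha0 : 0 ≤ a := Real.sqrt_nonneg _
  have hb0 : 0 ≤ b := Real.sqrt_nonneg _
  have ha2 : a ^ 2 = (A ^ 2 + (N - m)) / N := Real.sq_sqrt (by positivity)
  have hb2 : b ^ 2 = (B ^ 2 + (N - m)) / N := Real.sq_sqrt (by positivity)
  have hab : (A * B + (N - m)) / N ≤ a * b := by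
    rw [hadef, hbdef, ← Real.sqrt_mul (by positivity)]
    rw [Real.le_sqrt (by positivity) (by positivity)]
    rw [div_pow, div_mul_div_comm]
    rw [div_le_div_iff₀ (by positivity) (by positivity)]
    ring_nf
    nlinarith [mul_nonneg (mul_nonneg ht (sq_nonneg (A - B))) (sq_nonneg N)]
  have key : F / m ≤ (a + b) ^ 2 := by
    have e1 : (a + b) ^ 2 = a ^ 2 + b ^ 2 + 2 * (a * b) := by ring
    have e2 : a ^ 2 + b ^ 2 + 2 * ((A * B + (N - m)) / N) = ((A + B) ^ 2 + 4 * (N - m)) / N := by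
      rw [ha2, hb2]; ring
    have e3 : F / m ≤ ((A + B) ^ 2 + 4 * (N - m)) / N := by
      rw [div_le_div_iff₀ hm hN]
      nlinarith
    nlinarith
  calc Real.sqrt (F / m) ≤ Real.sqrt ((a + b) ^ 2) := Real.sqrt_le_sqrt key
    _ = a + b := Real.sqrt_sq (by positivity)

lemma filter_not_lt_card {m N : ℕ} (h : m ≤ N) :
    (∑ j : Fin N, if (j : ℕ) < m then (0 : ℝ) else 1) = (N : ℝ) - m := by
  rw [Fin.sum_univ_eq_sum_range (fun j => if j < m then (0 : ℝ) else 1) N]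
  rw [Finset.sum_ite, Finset.sum_const, Finset.sum_const]
  have h1 : (Finset.range N).filter (fun j => j < m) = Finset.range m := by
    ext k; simp [Finset.mem_range]; try omega
  have h2 : (Finset.range N).filter (fun j => ¬ j < m) = Finset.range N \ Finset.range m := by
    ext k; simp [Finset.mem_range]; try omega
  rw [h1, h2, Finset.card_sdiff_of_subset (Finset.range_subset_range.mpr h)]
  simp [Nat.cast_sub h]

lemma filter_lt_card {m N : ℕ} (h : m ≤ N) :
    (∑ j : Fin N, if (j : ℕ) < m then (1 : ℝ) else 0) = (m : ℝ) := by
  rw [Fin.sum_univ_eq_sum_range (fun j => if j < m then (1 : ℝ) else 0) N]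
  rw [Finset.sum_ite, Finset.sum_const, Finset.sum_const]
  have h1 : (Finset.range N).filter (fun j => j < m) = Finset.range m := by
    ext k; simp [Finset.mem_range]; try omega
  rw [h1]
  simp
lemma d₂_symm (x y : Σ m : ℕ, Matrix.unitaryGroup (Fin m) ℂ) : d₂ x y = d₂ y x := by
  rw [d₂_eq (M := max x.1 y.1) (le_max_left _ _) (le_max_right _ _),
    d₂_eq (M := max x.1 y.1) (le_max_right _ _) (le_max_left _ _),
    fSq_sub_comm, Nat.max_comm]

lemma d₂_eq_zero_iff (x y : Σ m : ℕ, Matrix.unitaryGroup (Fin m) ℂ) :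
    d₂ x y = 0 ↔ x = y := by
  constructor
  · intro h
    by_cases h0 : max x.1 y.1 = 0
    · exact eq_of_dim_zero (Nat.max_eq_zero_iff.mp h0).1 (Nat.max_eq_zero_iff.mp h0).2
    · set M := max x.1 y.1 with hM
      rw [d₂_eq (M := M) (le_max_left _ _) (le_max_right _ _)] at h
      have hMpos : (0 : ℝ) < (M : ℝ) := by
        exact_mod_cast Nat.pos_of_ne_zero h0
      have hfsq : fSq (emb M x - emb M y) = 0 := by
        have h1 : fSq (emb M x - emb M y) / (M : ℝ) ≤ 0 := Real.sqrt_eq_zero'.mp h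
        have h2 := fSq_nonneg (emb M x - emb M y)
        by_contra hne
        have hpos : 0 < fSq (emb M x - emb M y) := lt_of_le_of_ne h2 (Ne.symm hne)
        have : 0 < fSq (emb M x - emb M y) / (M : ℝ) := div_pos hpos hMpos
        linarith
      have hemb : emb M x = emb M y := eq_of_fSq_sub_eq_zero hfsq
      -- dimensions agree
      have hdim : x.1 = y.1 := by
        by_contra hne
        rcases Nat.lt_or_ge x.1 y.1 with hlt | hge
        · -- column x.1 of emb M y is a unit column, of emb M x is zero
          have hyM : y.1 = M := by rw [hM]; omega
          have hj : (x.1 : ℕ) < M := by omega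
          set j : Fin M := ⟨x.1, hj⟩ with hjdef
          have c1 : colSq (emb M x) j = 0 := by
            rw [emb, colSq_padMat (by omega), dif_neg (by simp [hjdef])]
          have c2 : colSq (emb M y) j = 1 := by
            rw [emb, colSq_padMat (by omega), dif_pos (by simp [hjdef]; omega)]
            exact colSq_unitary _ _
          rw [hemb, c2] at c1
          norm_num at c1
        · have hlt : y.1 < x.1 := by omega
          have hj : (y.1 : ℕ) < M := by rw [hM]; omega
          set j : Fin M := ⟨y.1, hj⟩ with hjdef
          have c1 : colSq (emb M y) j = 0 := by
            rw [emb, colSq_padMat (by omega), dif_neg (by simp [hjdef])]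
          have c2 : colSq (emb M x) j = 1 := by
            rw [emb, colSq_padMat (by omega), dif_pos (by simp [hjdef]; omega)]
            exact colSq_unitary _ _
          rw [hemb, c1] at c2
          norm_num at c2
      -- now conclude equality
      obtain ⟨n, u⟩ := x
      obtain ⟨m, v⟩ := y
      dsimp at hdim
      subst hdim
      congr 1
      apply Subtype.ext
      funext i j
      have hi : (i : ℕ) < M := lt_of_lt_of_le i.isLt (le_max_left _ _)
      have hj : (j : ℕ) < M := lt_of_lt_of_le j.isLt (le_max_left _ _)
      have h3 := congrFun (congrFun hemb ⟨i, hi⟩) ⟨j, hj⟩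
      simpa [emb, padMat, i.isLt, j.isLt] using h3
  · rintro rfl
    exact d₂_self x
lemma colSq_emb_le_one {N : ℕ} (x : Σ m : ℕ, Matrix.unitaryGroup (Fin m) ℂ)
    (hx : x.1 ≤ N) (j : Fin N) : colSq (emb N x) j ≤ 1 := by
  rw [emb, colSq_padMat hx]
  split_ifs with h
  · rw [colSq_unitary]
  · norm_num

lemma emb_apply_zero {N : ℕ} (x : Σ m : ℕ, Matrix.unitaryGroup (Fin m) ℂ)
    {i j : Fin N} (hj : ¬ (j : ℕ) < x.1) : emb N x i j = 0 := by
  by_cases hi : (i : ℕ) < x.1 <;> simp [emb, padMat, hi, hj]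

lemma colSq_zero_sub {k : ℕ} (A : Matrix (Fin k) (Fin k) ℂ) (j : Fin k) :
    colSq (0 - A) j = colSq A j := by
  unfold colSq
  exact Finset.sum_congr rfl fun i _ => by
    rw [Matrix.sub_apply, Matrix.zero_apply, zero_sub, Complex.normSq_neg]

lemma colSq_sub_zero {k : ℕ} (A : Matrix (Fin k) (Fin k) ℂ) (j : Fin k) :
    colSq (A - 0) j = colSq A j := by rw [sub_zero]

lemma d₂_triangle (x y z : Σ m : ℕ, Matrix.unitaryGroup (Fin m) ℂ) :
    d₂ x z ≤ d₂ x y + d₂ y z := by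
  by_cases hxy0 : x.1 = 0 ∧ y.1 = 0
  · have hxy : x = y := eq_of_dim_zero hxy0.1 hxy0.2
    rw [hxy, d₂_self]
    simp
  by_cases hyz0 : y.1 = 0 ∧ z.1 = 0
  · have hyz : y = z := eq_of_dim_zero hyz0.1 hyz0.2
    rw [hyz, d₂_self z]
    simp
  by_cases hM0 : max x.1 z.1 = 0
  · rw [d₂_eq (M := max (max x.1 y.1) z.1) (le_max_of_le_left (le_max_left _ _))
      (le_max_right _ _), hM0]
    simp only [Nat.cast_zero, div_zero, Real.sqrt_zero]
    exact add_nonneg (d₂_nonneg _ _) (d₂_nonneg _ _)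
  have hm13 : 0 < max x.1 z.1 := Nat.pos_of_ne_zero hM0
  have h12pos : 0 < max x.1 y.1 := by
    rcases Nat.eq_zero_or_pos x.1 with h | h
    · rcases Nat.eq_zero_or_pos y.1 with h' | h'
      · exact absurd ⟨h, h'⟩ hxy0
      · omega
    · omega
  have h23pos : 0 < max y.1 z.1 := by
    rcases Nat.eq_zero_or_pos y.1 with h | h
    · rcases Nat.eq_zero_or_pos z.1 with h' | h'
      · exact absurd ⟨h, h'⟩ hyz0
      · omega
    · omega
  rcases le_or_gt y.1 (max x.1 z.1) with hcase | hcase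
  · -- EASY CASE : middle dimension is not the strictly largest
    set M0 := max x.1 z.1 with hM0def
    have hxM : x.1 ≤ M0 := le_max_left _ _
    have hzM : z.1 ≤ M0 := le_max_right _ _
    have hyM : y.1 ≤ M0 := hcase
    rw [d₂_eq (M := M0) hxM hzM, d₂_eq (M := M0) hxM hyM, d₂_eq (M := M0) hyM hzM]
    have h12le : max x.1 y.1 ≤ M0 := max_le hxM hyM
    have h23le : max y.1 z.1 ≤ M0 := max_le hyM hzM
    have hF13 : Real.sqrt (fSq (emb M0 x - emb M0 z)) ≤
        Real.sqrt (fSq (emb M0 x - emb M0 y)) + Real.sqrt (fSq (emb M0 y - emb M0 z)) :=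
      sqrt_fSq_triangle (emb M0 x) (emb M0 y) (emb M0 z)
    rw [Real.sqrt_div (fSq_nonneg _), Real.sqrt_div (fSq_nonneg _),
      Real.sqrt_div (fSq_nonneg _)]
    have hM0r : (0 : ℝ) < Real.sqrt (M0 : ℕ) := Real.sqrt_pos.mpr (by exact_mod_cast hm13)
    have h12r : (0 : ℝ) < Real.sqrt ((max x.1 y.1 : ℕ) : ℝ) :=
      Real.sqrt_pos.mpr (by exact_mod_cast h12pos)
    have h23r : (0 : ℝ) < Real.sqrt ((max y.1 z.1 : ℕ) : ℝ) :=
      Real.sqrt_pos.mpr (by exact_mod_cast h23pos)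
    calc Real.sqrt (fSq (emb M0 x - emb M0 z)) / Real.sqrt ((M0 : ℕ) : ℝ)
        ≤ (Real.sqrt (fSq (emb M0 x - emb M0 y)) + Real.sqrt (fSq (emb M0 y - emb M0 z)))
            / Real.sqrt ((M0 : ℕ) : ℝ) := by gcongr
      _ = Real.sqrt (fSq (emb M0 x - emb M0 y)) / Real.sqrt ((M0 : ℕ) : ℝ)
            + Real.sqrt (fSq (emb M0 y - emb M0 z)) / Real.sqrt ((M0 : ℕ) : ℝ) := add_div _ _ _
      _ ≤ Real.sqrt (fSq (emb M0 x - emb M0 y)) / Real.sqrt ((max x.1 y.1 : ℕ) : ℝ)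
            + Real.sqrt (fSq (emb M0 y - emb M0 z)) / Real.sqrt ((max y.1 z.1 : ℕ) : ℝ) := by
          refine add_le_add ?_ ?_
          · exact div_le_div_of_nonneg_left (Real.sqrt_nonneg _) h12r
              (Real.sqrt_le_sqrt (by exact_mod_cast h12le))
          · exact div_le_div_of_nonneg_left (Real.sqrt_nonneg _) h23r
              (Real.sqrt_le_sqrt (by exact_mod_cast h23le))
  · -- HARD CASE : middle dimension strictly largest
    set m := max x.1 z.1 with hmdef
    set N := y.1 with hNdef
    have hmN : m < N := hcase
    have hxN : x.1 ≤ N := le_of_lt (lt_of_le_of_lt (le_max_left _ _) hcase)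
    have hzN : z.1 ≤ N := le_of_lt (lt_of_le_of_lt (le_max_right _ _) hcase)
    have hyN : y.1 ≤ N := le_rfl
    have h12 : max x.1 y.1 = N := Nat.max_eq_right hxN
    have h23 : max y.1 z.1 = N := Nat.max_eq_left hzN
    rw [d₂_eq (M := N) hxN hzN, d₂_eq (M := N) hxN hyN, d₂_eq (M := N) hyN hzN, h12, h23]
    set u := emb N x with hudef
    set yy := emb N y with hyydef
    set w := emb N z with hwdef
    -- column quantities
    have hyy_unit : ∀ j : Fin N, colSq yy j = 1 := by
      intro j
      have : yy = (y.2 : Matrix (Fin y.1) (Fin y.1) ℂ) := padMat_self _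
      rw [this, colSq_unitary]
    have hu0 : ∀ (i j : Fin N), ¬ (j : ℕ) < m → u i j = 0 := fun i j hj =>
      emb_apply_zero x (fun hh => hj (lt_of_lt_of_le hh (le_max_left _ _)))
    have hw0 : ∀ (i j : Fin N), ¬ (j : ℕ) < m → w i j = 0 := fun i j hj =>
      emb_apply_zero z (fun hh => hj (lt_of_lt_of_le hh (le_max_right _ _)))
    have hα1 : ∀ j : Fin N, ¬ (j : ℕ) < m → colSq (u - yy) j = 1 := by
      intro j hj
      rw [show colSq (u - yy) j = colSq yy j from Finset.sum_congr rfl fun i _ => by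
        rw [Matrix.sub_apply, hu0 i j hj, zero_sub, Complex.normSq_neg]]
      exact hyy_unit j
    have hβ1 : ∀ j : Fin N, ¬ (j : ℕ) < m → colSq (yy - w) j = 1 := by
      intro j hj
      rw [show colSq (yy - w) j = colSq yy j from Finset.sum_congr rfl fun i _ => by
        rw [Matrix.sub_apply, hw0 i j hj, sub_zero]]
      exact hyy_unit j
    have hγ0 : ∀ j : Fin N, ¬ (j : ℕ) < m → colSq (u - w) j = 0 := by
      intro j hj
      refine Finset.sum_eq_zero fun i _ => by
        rw [Matrix.sub_apply, hu0 i j hj, hw0 i j hj, sub_zero, Complex.normSq_zero]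
    have hu_le : ∀ j : Fin N, colSq u j ≤ 1 := fun j => colSq_emb_le_one x hxN j
    have hw_le : ∀ j : Fin N, colSq w j ≤ 1 := fun j => colSq_emb_le_one z hzN j
    clear_value u yy w
    -- the truncated sums
    set A2 := ∑ j : Fin N, if (j : ℕ) < m then colSq (u - yy) j else 0 with hA2def
    set B2 := ∑ j : Fin N, if (j : ℕ) < m then colSq (yy - w) j else 0 with hB2def
    set C2 := ∑ j : Fin N, if (j : ℕ) < m then colSq (u - w) j else 0 with hC2def
    have hA2nn : 0 ≤ A2 := Finset.sum_nonneg fun j _ => by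
      split_ifs; exacts [colSq_nonneg _ _, le_rfl]
    have hB2nn : 0 ≤ B2 := Finset.sum_nonneg fun j _ => by
      split_ifs; exacts [colSq_nonneg _ _, le_rfl]
    have hC2nn : 0 ≤ C2 := Finset.sum_nonneg fun j _ => by
      split_ifs; exacts [colSq_nonneg _ _, le_rfl]
    clear_value A2 B2 C2
    -- decompositions of the three fSq's
    have hF12 : fSq (u - yy) = A2 + ((N : ℝ) - m) := by
      rw [fSq_eq_sum_colSq, ← filter_not_lt_card (le_of_lt hmN), hA2def, ← Finset.sum_add_distrib]
      refine Finset.sum_congr rfl fun j _ => ?_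
      split_ifs with h
      · rw [add_zero]
      · rw [hα1 j h, zero_add]
    have hF23 : fSq (yy - w) = B2 + ((N : ℝ) - m) := by
      rw [fSq_eq_sum_colSq, ← filter_not_lt_card (le_of_lt hmN), hB2def, ← Finset.sum_add_distrib]
      refine Finset.sum_congr rfl fun j _ => ?_
      split_ifs with h
      · rw [add_zero]
      · rw [hβ1 j h, zero_add]
    have hF13 : fSq (u - w) = C2 := by
      rw [fSq_eq_sum_colSq, hC2def]
      refine Finset.sum_congr rfl fun j _ => ?_
      split_ifs with h
      · rfl
      · exact hγ0 j h
    -- bounds on C2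
    set A := Real.sqrt A2 with hAdef
    set B := Real.sqrt B2 with hBdef
    have hAsq : A ^ 2 = A2 := Real.sq_sqrt hA2nn
    have hBsq : B ^ 2 = B2 := Real.sq_sqrt hB2nn
    have hA0 : 0 ≤ A := hAdef ▸ Real.sqrt_nonneg _
    have hB0 : 0 ≤ B := hBdef ▸ Real.sqrt_nonneg _
    clear_value A B
    have hCS : (∑ j : Fin N, if (j : ℕ) < m
          then Real.sqrt (colSq (u - yy) j) * Real.sqrt (colSq (yy - w) j) else 0) ≤ A * B := by
      have h1 := Finset.sum_mul_sq_le_sq_mul_sq Finset.univ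
        (fun j : Fin N => if (j : ℕ) < m then Real.sqrt (colSq (u - yy) j) else 0)
        (fun j : Fin N => if (j : ℕ) < m then Real.sqrt (colSq (yy - w) j) else 0)
      have e1 : (∑ j : Fin N, (if (j : ℕ) < m then Real.sqrt (colSq (u - yy) j) else 0)
          * (if (j : ℕ) < m then Real.sqrt (colSq (yy - w) j) else 0))
          = ∑ j : Fin N, if (j : ℕ) < m
              then Real.sqrt (colSq (u - yy) j) * Real.sqrt (colSq (yy - w) j) else 0 := by
        refine Finset.sum_congr rfl fun j _ => ?_
        split_ifs <;> simp
      have e2 : (∑ j : Fin N, (if (j : ℕ) < m then Real.sqrt (colSq (u - yy) j) else 0) ^ 2)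
          = A2 := by
        rw [hA2def]
        refine Finset.sum_congr rfl fun j _ => ?_
        split_ifs with h
        · exact Real.sq_sqrt (colSq_nonneg _ _)
        · exact zero_pow (by norm_num)
      have e3 : (∑ j : Fin N, (if (j : ℕ) < m then Real.sqrt (colSq (yy - w) j) else 0) ^ 2)
          = B2 := by
        rw [hB2def]
        refine Finset.sum_congr rfl fun j _ => ?_
        split_ifs with h
        · exact Real.sq_sqrt (colSq_nonneg _ _)
        · exact zero_pow (by norm_num)
      rw [e1, e2, e3] at h1
      have hS0 : 0 ≤ ∑ j : Fin N, if (j : ℕ) < m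
          then Real.sqrt (colSq (u - yy) j) * Real.sqrt (colSq (yy - w) j) else 0 :=
        Finset.sum_nonneg fun j _ => by
          split_ifs
          · positivity
          · exact le_rfl
      calc (∑ j : Fin N, if (j : ℕ) < m
              then Real.sqrt (colSq (u - yy) j) * Real.sqrt (colSq (yy - w) j) else 0)
          = Real.sqrt ((∑ j : Fin N, if (j : ℕ) < m
              then Real.sqrt (colSq (u - yy) j) * Real.sqrt (colSq (yy - w) j) else 0) ^ 2) :=
            (Real.sqrt_sq hS0).symm
        _ ≤ Real.sqrt (A2 * B2) := Real.sqrt_le_sqrt h1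
        _ = A * B := by rw [Real.sqrt_mul hA2nn, ← hAdef, ← hBdef]
    have hC2AB : C2 ≤ (A + B) ^ 2 := by
      have hpt : ∀ j : Fin N, (if (j : ℕ) < m then colSq (u - w) j else 0)
          ≤ (if (j : ℕ) < m then colSq (u - yy) j + colSq (yy - w) j
              + 2 * (Real.sqrt (colSq (u - yy) j) * Real.sqrt (colSq (yy - w) j)) else 0) := by
        intro j
        split_ifs with h
        · have ht := sqrt_colSq_triangle u yy w j
          have h2 : colSq (u - w) j = Real.sqrt (colSq (u - w) j) ^ 2 :=
            (Real.sq_sqrt (colSq_nonneg _ _)).symm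
          nlinarith [Real.sqrt_nonneg (colSq (u - w) j), Real.sqrt_nonneg (colSq (u - yy) j),
            Real.sqrt_nonneg (colSq (yy - w) j), Real.sq_sqrt (colSq_nonneg (u - yy) j),
            Real.sq_sqrt (colSq_nonneg (yy - w) j)]
        · exact le_rfl
      have h1 : C2 ≤ A2 + B2 + 2 * (∑ j : Fin N, if (j : ℕ) < m
          then Real.sqrt (colSq (u - yy) j) * Real.sqrt (colSq (yy - w) j) else 0) := by
        rw [hC2def]
        calc (∑ j : Fin N, if (j : ℕ) < m then colSq (u - w) j else 0)
            ≤ ∑ j : Fin N, (if (j : ℕ) < m then colSq (u - yy) j + colSq (yy - w) j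
                + 2 * (Real.sqrt (colSq (u - yy) j) * Real.sqrt (colSq (yy - w) j)) else 0) :=
              Finset.sum_le_sum fun j _ => hpt j
          _ = A2 + B2 + 2 * (∑ j : Fin N, if (j : ℕ) < m
                then Real.sqrt (colSq (u - yy) j) * Real.sqrt (colSq (yy - w) j) else 0) := by
              rw [hA2def, hB2def, Finset.mul_sum, ← Finset.sum_add_distrib,
                ← Finset.sum_add_distrib]
              refine Finset.sum_congr rfl fun j _ => ?_
              split_ifs <;> ring
      calc C2 ≤ A2 + B2 + 2 * (∑ j : Fin N, if (j : ℕ) < m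
              then Real.sqrt (colSq (u - yy) j) * Real.sqrt (colSq (yy - w) j) else 0) := h1
        _ ≤ A2 + B2 + 2 * (A * B) := by linarith
        _ = (A + B) ^ 2 := by rw [← hAsq, ← hBsq]; ring
    have hC2m : C2 ≤ 4 * (m : ℝ) := by
      have h4 : (∑ j : Fin N, if (j : ℕ) < m then (4 : ℝ) else 0) = 4 * (m : ℝ) := by
        rw [← filter_lt_card (le_of_lt hmN), Finset.mul_sum]
        refine Finset.sum_congr rfl fun j _ => ?_
        split_ifs <;> norm_num
      rw [hC2def, ← h4]
      refine Finset.sum_le_sum fun j _ => ?_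
      split_ifs with h
      · -- colSq (u - w) j ≤ 4
        have ht := sqrt_colSq_triangle u (0 : Matrix (Fin N) (Fin N) ℂ) w j
        rw [colSq_sub_zero, colSq_zero_sub] at ht
        have hu1 : Real.sqrt (colSq u j) ≤ 1 := by
          rw [show (1:ℝ) = Real.sqrt 1 from (Real.sqrt_one).symm]
          exact Real.sqrt_le_sqrt (hu_le j)
        have hw1 : Real.sqrt (colSq w j) ≤ 1 := by
          rw [show (1:ℝ) = Real.sqrt 1 from (Real.sqrt_one).symm]
          exact Real.sqrt_le_sqrt (hw_le j)
        nlinarith [Real.sqrt_nonneg (colSq (u - w) j), Real.sq_sqrt (colSq_nonneg (u - w) j),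
          Real.sqrt_nonneg (colSq u j), Real.sqrt_nonneg (colSq w j)]
      · exact le_rfl
    -- final numeric inequality
    rw [hF12, hF23, hF13, ← hAsq, ← hBsq]
    have hmr : (0 : ℝ) < (m : ℝ) := by exact_mod_cast hm13
    have hmNr : (m : ℝ) ≤ (N : ℝ) := by exact_mod_cast le_of_lt hmN
    exact num_key hmr hmNr hA0 hB0 hC2nn hC2AB hC2m
end D2Aux

/-- `d₂` is a metric on the disjoint union of the unitary groups. -/
theorem d₂_is_metric :
    (∀ x y : Σ m : ℕ, Matrix.unitaryGroup (Fin m) ℂ, d₂ x y = 0 ↔ x = y) ∧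
    (∀ x y : Σ m : ℕ, Matrix.unitaryGroup (Fin m) ℂ, d₂ x y = d₂ y x) ∧
    (∀ x y z : Σ m : ℕ, Matrix.unitaryGroup (Fin m) ℂ, d₂ x z ≤ d₂ x y + d₂ y z) :=
  ⟨d₂_eq_zero_iff, d₂_symm, d₂_triangle⟩
end

section
/- Let Γ be a countable group, c : Γ × Γ → 𝕋 a 2-cocycle (with trivial Γ-action on 𝕋), and suppose λ_n : Γ → 𝕋 is a sequence of functions such that for every g, h ∈ Γ, lim_n λ_n(g)⁻¹λ_n(h)⁻¹λ_n(gh) = c(g, h). Then c is a 2-coboundary, i.e. there exists λ : Γ → 𝕋 with c(g, h) = λ(g)λ(h)λ(gh)⁻¹ for all g, h ∈ Γ. -/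
open Filter

/-- If a `𝕋`-valued 2-cocycle `c` on a countable group `Γ` (trivial action)
is a pointwise limit of "asymptotic coboundaries" `(g,h) ↦ λ_n(g)⁻¹λ_n(h)⁻¹λ_n(gh)`, then `c`
is a 2-coboundary. -/
theorem coboundary_of_limit_of_almost_coboundaries
    {Γ : Type*} [Group Γ] [Countable Γ]
    (c : Γ → Γ → Circle)
    (hcocycle : ∀ g h k : Γ, c g h * c (g * h) k = c h k * c g (h * k))
    (lam : ℕ → Γ → Circle)
    (hlim : ∀ g h : Γ,
      Tendsto (fun n => (lam n g)⁻¹ * (lam n h)⁻¹ * lam n (g * h)) atTop (nhds (c g h))) :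
    ∃ l : Γ → Circle, ∀ g h : Γ, c g h = l g * l h * (l (g * h))⁻¹ := by
  set U : Ultrafilter ℕ := Ultrafilter.of atTop with hU
  have hUle : (U : Filter ℕ) ≤ atTop := Ultrafilter.of_le atTop
  set lim : Γ → Circle := fun g => (U.map (fun n => lam n g)).lim with hlam
  have hconv : ∀ g : Γ, Tendsto (fun n => lam n g) U (nhds (lim g)) := by
    intro g
    exact (U.map (fun n => lam n g)).le_nhds_lim
  have key : ∀ g h : Γ, c g h = (lim g)⁻¹ * (lim h)⁻¹ * lim (g * h) := by
    intro g h
    have h1 : Tendsto (fun n => (lam n g)⁻¹ * (lam n h)⁻¹ * lam n (g * h)) U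
        (nhds ((lim g)⁻¹ * (lim h)⁻¹ * lim (g * h))) :=
      (((hconv g).inv.mul (hconv h).inv).mul (hconv (g * h)))
    have h2 : Tendsto (fun n => (lam n g)⁻¹ * (lam n h)⁻¹ * lam n (g * h)) U
        (nhds (c g h)) := (hlim g h).mono_left hUle
    exact tendsto_nhds_unique h2 h1
  refine ⟨fun g => (lim g)⁻¹, fun g h => ?_⟩
  rw [key g h, inv_inv]
end
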